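/- arXiv:1204.0495 — 2 statements merged into one kernel-verified Lean document; each statement's English description precedes it below -/
import Mathlib

section
/- Let H be a connected finite simple graph of order n ≥ 2 with diameter two. Then dim_s(H) = n − ϖ(H). -/
open SimpleGraph

/-- A vertex `w` strongly resolves the pair `u`, `v` if `v` lies on some shortest `u`–`w`
path or `u` lies on some shortest `v`–`w` path. -/
def StronglyResolves {V : Type*} (G : SimpleGraph V) (w u v : V) : Prop :=
  G.dist u w = G.dist u v + G.dist v w ∨ G.dist v w = G.dist v u + G.dist u w

/-- `S` is a strong resolving set for `G` if every pair of distinct vertices is strongly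
resolved by some vertex of `S`. -/
def IsStrongResolvingSet {V : Type*} (G : SimpleGraph V) (S : Set V) : Prop :=
  ∀ u v : V, u ≠ v → ∃ w ∈ S, StronglyResolves G w u v

/-- The strong metric dimension: the minimum cardinality of a strong resolving set. -/
noncomputable def strongDim {V : Type*} (G : SimpleGraph V) [Fintype V] : ℕ :=
  sInf {k | ∃ S : Finset V, IsStrongResolvingSet G ↑S ∧ S.card = k}

/-- The closed neighborhood of a vertex. -/
def closedNbhd {V : Type*} (G : SimpleGraph V) (v : V) : Set V :=
  insert v (G.neighborSet v)

/-- A twin-free clique: a clique containing no pair of true twins. -/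
def IsTwinFreeClique {V : Type*} (G : SimpleGraph V) (X : Finset V) : Prop :=
  G.IsClique ↑X ∧ ∀ u ∈ X, ∀ v ∈ X, u ≠ v → closedNbhd G u ≠ closedNbhd G v

/-- The twin-free clique number: maximum cardinality of a twin-free clique. -/
noncomputable def twinFreeCliqueNum {V : Type*} (G : SimpleGraph V) [Fintype V] : ℕ :=
  sSup {k | ∃ X : Finset V, IsTwinFreeClique G X ∧ X.card = k}

/-- Adjacency relation of the join of two graphs. -/
def joinAdj {V W : Type*} (G : SimpleGraph V) (H : SimpleGraph W) :
    V ⊕ W → V ⊕ W → Prop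
  | Sum.inl a, Sum.inl b => G.Adj a b
  | Sum.inr a, Sum.inr b => H.Adj a b
  | Sum.inl _, Sum.inr _ => True
  | Sum.inr _, Sum.inl _ => True

/-- The join `G + H`: disjoint union of `G` and `H` plus all edges between them. -/
def joinGraph {V W : Type*} (G : SimpleGraph V) (H : SimpleGraph W) :
    SimpleGraph (V ⊕ W) where
  Adj := joinAdj G H
  symm := ⟨by
    rintro (a | a) (b | b) h
    · exact G.adj_symm h
    · trivial
    · trivial
    · exact H.adj_symm h⟩
  loopless := ⟨by
    rintro (a | a) h
    · exact G.irrefl h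
    · exact H.irrefl h⟩

/-- Adjacency relation of the corona product `G ⊙ H`. -/
def coronaAdj {V W : Type*} (G : SimpleGraph V) (H : SimpleGraph W) :
    V ⊕ V × W → V ⊕ V × W → Prop
  | Sum.inl a, Sum.inl b => G.Adj a b
  | Sum.inr p, Sum.inr q => p.1 = q.1 ∧ H.Adj p.2 q.2
  | Sum.inl a, Sum.inr q => a = q.1
  | Sum.inr p, Sum.inl b => p.1 = b

/-- The corona product `G ⊙ H`: one copy of `G` and one copy of `H` for each vertex of
`G`, with the `i`-th vertex of `G` joined to every vertex of the `i`-th copy of `H`. -/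
def corona {V W : Type*} (G : SimpleGraph V) (H : SimpleGraph W) :
    SimpleGraph (V ⊕ V × W) where
  Adj := coronaAdj G H
  symm := ⟨by
    rintro (a | p) (b | q) h
    · exact G.adj_symm h
    · exact h.symm
    · exact h.symm
    · exact ⟨h.1.symm, H.adj_symm h.2⟩⟩
  loopless := ⟨by
    rintro (a | p) h
    · exact G.irrefl h
    · exact H.irrefl h.2⟩

/-- The disjoint union of copies of `H`, one copy for each element of `V`. -/
def copies (V : Type*) {W : Type*} (H : SimpleGraph W) : SimpleGraph (V × W) where
  Adj p q := p.1 = q.1 ∧ H.Adj p.2 q.2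
  symm := ⟨fun _ _ h => ⟨h.1.symm, h.2.symm⟩⟩
  loopless := ⟨fun p h => H.irrefl h.2⟩

/-- The algebraic connectivity: the second smallest eigenvalue (with multiplicity,
in nondecreasing order) of the Laplacian matrix. -/
noncomputable def algebraicConnectivity {V : Type*} (G : SimpleGraph V) [Fintype V]
    [DecidableEq V] [DecidableRel G.Adj] : ℝ :=
  (((Finset.univ.val.map ((G.posSemidef_lapMatrix ℝ).isHermitian.eigenvalues)).sort
    (· ≤ ·)).getD 1 0)

section Aux

variable {V : Type*} [Fintype V] (H : SimpleGraph V)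

lemma dist_le_two_aux (hdiam : H.diam = 2) (u v : V) : H.dist u v ≤ 2 := by
  have h := SimpleGraph.dist_le_diam (G := H)
    (SimpleGraph.ediam_ne_top_of_diam_ne_zero (by omega : H.diam ≠ 0)) (u := u) (v := v)
  omega

lemma dist_eq_two_aux (hconn : H.Connected) (hdiam : H.diam = 2) {u v : V}
    (hne : u ≠ v) (hadj : ¬ H.Adj u v) : H.dist u v = 2 := by
  have h1 := dist_le_two_aux H hdiam u v
  have h2 : H.dist u v ≠ 0 := fun h => hne (hconn.dist_eq_zero_iff.mp h)
  have h3 : H.dist u v ≠ 1 := fun h => hadj (SimpleGraph.dist_eq_one_iff_adj.mp h)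
  omega

/-- Membership in closed nbhd -/
lemma mem_closedNbhd_iff {u z : V} : z ∈ closedNbhd H u ↔ z = u ∨ H.Adj u z := by
  simp [closedNbhd, SimpleGraph.mem_neighborSet]

/-- Core: for diameter two, S strong resolving iff complement is twin-free clique. -/
lemma srs_iff_tfc [DecidableEq V] (hconn : H.Connected) (hdiam : H.diam = 2)
    (S : Finset V) :
    IsStrongResolvingSet H ↑S ↔ IsTwinFreeClique H Sᶜ := by
  constructor
  · intro hS
    have hclique : H.IsClique ↑(Sᶜ) := by
      intro u hu v hv hne
      simp only [Finset.coe_compl, Set.mem_compl_iff, Finset.mem_coe] at hu hv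
      by_contra hadj
      obtain ⟨w, hwS, hw⟩ := hS u v hne
      have huv : H.dist u v = 2 := dist_eq_two_aux H hconn hdiam hne hadj
      have hvu : H.dist v u = 2 := dist_eq_two_aux H hconn hdiam hne.symm
        (fun h => hadj h.symm)
      rcases hw with h | h
      · have := dist_le_two_aux H hdiam u w
        have : H.dist v w = 0 := by omega
        have : w = v := (hconn.dist_eq_zero_iff.mp this).symm
        exact hv (this ▸ hwS)
      · have := dist_le_two_aux H hdiam v w
        have : H.dist u w = 0 := by omega
        have : w = u := (hconn.dist_eq_zero_iff.mp this).symm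
        exact hu (this ▸ hwS)
    refine ⟨hclique, ?_⟩
    intro u hu v hv hne heq
    have hadj : H.Adj u v := hclique (by simpa using hu) (by simpa using hv) hne
    simp only [Finset.mem_compl] at hu hv
    obtain ⟨w, hwS, hw⟩ := hS u v hne
    have hwu : w ≠ u := fun h => hu (h ▸ hwS)
    have hwv : w ≠ v := fun h => hv (h ▸ hwS)
    -- distances from w to u and v are equal since N[u] = N[v]
    have hsame : H.dist u w = H.dist v w := by
      have key : H.Adj u w ↔ H.Adj v w := by
        constructor
        · intro h
          have : w ∈ closedNbhd H u := (mem_closedNbhd_iff H).mpr (Or.inr h)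
          rcases (mem_closedNbhd_iff H).mp (heq ▸ this) with h' | h'
          · exact absurd h' hwv
          · exact h'
        · intro h
          have : w ∈ closedNbhd H v := (mem_closedNbhd_iff H).mpr (Or.inr h)
          rcases (mem_closedNbhd_iff H).mp (heq.symm ▸ this) with h' | h'
          · exact absurd h' hwu
          · exact h'
      by_cases h : H.Adj u w
      · rw [SimpleGraph.dist_eq_one_iff_adj.mpr h,
          SimpleGraph.dist_eq_one_iff_adj.mpr (key.mp h)]
      · rw [dist_eq_two_aux H hconn hdiam (Ne.symm hwu) h,
          dist_eq_two_aux H hconn hdiam (Ne.symm hwv) (fun h' => h (key.mpr h'))]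
    have huv1 : H.dist u v = 1 := SimpleGraph.dist_eq_one_iff_adj.mpr hadj
    have hvu1 : H.dist v u = 1 := SimpleGraph.dist_eq_one_iff_adj.mpr hadj.symm
    have hpos : 0 < H.dist u w :=
      hconn.pos_dist_of_ne (Ne.symm hwu)
    rcases hw with h | h <;> omega
  · rintro ⟨hclique, htf⟩ u v hne
    by_cases hu : u ∈ S
    · exact ⟨u, hu, Or.inr (by simp)⟩
    by_cases hv : v ∈ S
    · exact ⟨v, hv, Or.inl (by simp)⟩
    have hu' : u ∈ Sᶜ := Finset.mem_compl.mpr hu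
    have hv' : v ∈ Sᶜ := Finset.mem_compl.mpr hv
    have hadj : H.Adj u v := hclique (by simpa using hu') (by simpa using hv') hne
    have hneq := htf u hu' v hv' hne
    -- there is z in symmetric difference of closed neighborhoods
    have : ∃ z, (z ∈ closedNbhd H u ∧ z ∉ closedNbhd H v) ∨
        (z ∈ closedNbhd H v ∧ z ∉ closedNbhd H u) := by
      by_contra hc
      push_neg at hc
      apply hneq
      ext z
      constructor
      · intro h; exact (hc z).1 h
      · intro h; exact (hc z).2 h
    obtain ⟨z, hz⟩ := this
    -- WLOG handling via both cases
    rcases hz with ⟨hz1, hz2⟩ | ⟨hz1, hz2⟩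
    · -- z ∈ N[u] \ N[v]
      have hzv : z ≠ v := fun h => hz2 ((mem_closedNbhd_iff H).mpr (Or.inl h))
      have hznv : ¬ H.Adj v z := fun h => hz2 ((mem_closedNbhd_iff H).mpr (Or.inr h))
      have hzu : z ≠ u := by
        rintro rfl
        exact hz2 ((mem_closedNbhd_iff H).mpr (Or.inr hadj.symm))
      have hzadj : H.Adj u z := by
        rcases (mem_closedNbhd_iff H).mp hz1 with h | h
        · exact absurd h hzu
        · exact h
      have hzS : z ∈ S := by
        by_contra h
        exact hznv (hclique (by simpa using Finset.mem_compl.mpr hv)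
          (by simpa using Finset.mem_compl.mpr h) (Ne.symm hzv))
      refine ⟨z, hzS, Or.inr ?_⟩
      rw [dist_eq_two_aux H hconn hdiam hzv.symm hznv,
        SimpleGraph.dist_eq_one_iff_adj.mpr hadj.symm,
        SimpleGraph.dist_eq_one_iff_adj.mpr hzadj]
    · have hzu : z ≠ u := fun h => hz2 ((mem_closedNbhd_iff H).mpr (Or.inl h))
      have hznu : ¬ H.Adj u z := fun h => hz2 ((mem_closedNbhd_iff H).mpr (Or.inr h))
      have hzv : z ≠ v := by
        rintro rfl
        exact hz2 ((mem_closedNbhd_iff H).mpr (Or.inr hadj))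
      have hzadj : H.Adj v z := by
        rcases (mem_closedNbhd_iff H).mp hz1 with h | h
        · exact absurd h hzv
        · exact h
      have hzS : z ∈ S := by
        by_contra h
        exact hznu (hclique (by simpa using Finset.mem_compl.mpr hu)
          (by simpa using Finset.mem_compl.mpr h) (Ne.symm hzu))
      refine ⟨z, hzS, Or.inl ?_⟩
      rw [dist_eq_two_aux H hconn hdiam hzu.symm hznu,
        SimpleGraph.dist_eq_one_iff_adj.mpr hadj,
        SimpleGraph.dist_eq_one_iff_adj.mpr hzadj]

end Aux

/-- Let `H` be a connected finite simple graph of order `n ≥ 2` with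
diameter two. Then `dim_s(H) = n − ϖ(H)`. -/
theorem strongDim_eq_card_sub_twinFreeCliqueNum_of_diam_two {V : Type*} [Fintype V]
    (H : SimpleGraph V) (hconn : H.Connected) (hn : 2 ≤ Fintype.card V)
    (hdiam : H.diam = 2) :
    strongDim H = Fintype.card V - twinFreeCliqueNum H := by
  classical
  have hB_ne : {k | ∃ X : Finset V, IsTwinFreeClique H X ∧ X.card = k}.Nonempty := by
    refine ⟨0, ∅, ⟨?_, ?_⟩, Finset.card_empty⟩
    · simp [SimpleGraph.isClique_empty]
    · simp
  have hB_bdd : BddAbove {k | ∃ X : Finset V, IsTwinFreeClique H X ∧ X.card = k} := by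
    refine ⟨Fintype.card V, ?_⟩
    rintro k ⟨X, _, rfl⟩
    exact Finset.card_le_univ X
  have hA_ne : {k | ∃ S : Finset V, IsStrongResolvingSet H ↑S ∧ S.card = k}.Nonempty := by
    refine ⟨(Finset.univ : Finset V).card, Finset.univ, ?_, rfl⟩
    rw [srs_iff_tfc H hconn hdiam]
    constructor
    · simp [SimpleGraph.isClique_empty]
    · simp
  have hdim : strongDim H
      = sInf {k | ∃ S : Finset V, IsStrongResolvingSet H ↑S ∧ S.card = k} := rfl
  have htw : twinFreeCliqueNum H
      = sSup {k | ∃ X : Finset V, IsTwinFreeClique H X ∧ X.card = k} := rfl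
  rw [hdim, htw]
  obtain ⟨S, hS, hScard⟩ := Nat.sInf_mem hA_ne
  have hStfc : IsTwinFreeClique H Sᶜ := (srs_iff_tfc H hconn hdiam S).mp hS
  have h1 : Fintype.card V - S.card
      ≤ sSup {k | ∃ X : Finset V, IsTwinFreeClique H X ∧ X.card = k} := by
    apply le_csSup hB_bdd
    exact ⟨Sᶜ, hStfc, Finset.card_compl S⟩
  obtain ⟨X, hX, hXcard⟩ := Nat.sSup_mem hB_ne hB_bdd
  have hXsrs : IsStrongResolvingSet H ↑(Xᶜ) := by
    rw [srs_iff_tfc H hconn hdiam, compl_compl]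
    exact hX
  have h2 : sInf {k | ∃ S : Finset V, IsStrongResolvingSet H ↑S ∧ S.card = k}
      ≤ Fintype.card V - X.card := by
    apply Nat.sInf_le
    exact ⟨Xᶜ, hXsrs, Finset.card_compl X⟩
  have h3 : S.card ≤ Fintype.card V := Finset.card_le_univ S
  have h4 : X.card ≤ Fintype.card V := Finset.card_le_univ X
  omega
end

section
/- Let G be a connected non-complete finite simple graph of order n, maximum degree Δ, and algebraic connectivity μ (the second smallest eigenvalue of the Laplacian matrix of G, with eigenvalues listed in nondecreasing order with multiplicity). Then the clique number of G satisfies ω(G) ≤ n(Δ − μ + 1)/(n − μ). -/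
open SimpleGraph

section AuxSpectral

open Matrix

variable {V : Type*} [Fintype V] [DecidableEq V] (G : SimpleGraph V) [DecidableRel G.Adj]

lemma aux_exists_eigenvalue_zero [Nonempty V] :
    ∃ i, (G.posSemidef_lapMatrix ℝ).isHermitian.eigenvalues i = 0 := by
  by_contra h
  push_neg at h
  have hdet : (G.lapMatrix ℝ).det ≠ 0 := by
    rw [(G.posSemidef_lapMatrix ℝ).isHermitian.det_eq_prod_eigenvalues]
    exact Finset.prod_ne_zero_iff.mpr fun i _ => h i
  have h1 : (fun _ : V => (1 : ℝ)) = 0 :=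
    Matrix.eq_zero_of_mulVec_eq_zero hdet G.lapMatrix_mulVec_const_eq_zero
  have h2 := congrFun h1 (Classical.arbitrary V)
  simp at h2

lemma aux_algCon_le_eigenvalue (hcard : 2 ≤ Fintype.card V) (i : V)
    (hi : (G.posSemidef_lapMatrix ℝ).isHermitian.eigenvalues i ≠ 0) :
    algebraicConnectivity G ≤ (G.posSemidef_lapMatrix ℝ).isHermitian.eigenvalues i := by
  have : Nonempty V := Fintype.card_pos_iff.mp (by omega)
  set lam := (G.posSemidef_lapMatrix ℝ).isHermitian.eigenvalues with hlam
  set s : List ℝ := ((Finset.univ.val.map lam).sort (· ≤ ·)) with hs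
  have hlen : s.length = Fintype.card V := by
    rw [hs, Multiset.length_sort, Multiset.card_map]
    exact Finset.card_univ
  have hsorted : s.Pairwise (· ≤ ·) := Multiset.pairwise_sort _ _
  have h1lt : 1 < s.length := by omega
  have h0lt : 0 < s.length := by omega
  have hmem : ∀ r : ℝ, r ∈ s ↔ ∃ j, lam j = r := by
    intro r
    rw [hs, Multiset.mem_sort, Multiset.mem_map]
    simp
  have hnonneg : ∀ r ∈ s, (0 : ℝ) ≤ r := by
    intro r hr
    obtain ⟨j, hj⟩ := (hmem r).1 hr
    rw [← hj]
    exact (G.posSemidef_lapMatrix ℝ).eigenvalues_nonneg j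
  obtain ⟨k, hk⟩ := List.get_of_mem ((hmem 0).2 (aux_exists_eigenvalue_zero G))
  have hhead : s.get ⟨0, h0lt⟩ = 0 := by
    refine le_antisymm ?_ (hnonneg _ (s.get_mem ⟨0, h0lt⟩))
    calc s.get ⟨0, h0lt⟩ ≤ s.get k := hsorted.rel_get_of_le (by simp [Fin.le_def])
    _ = 0 := hk
  obtain ⟨j, hj⟩ := List.get_of_mem ((hmem (lam i)).2 ⟨i, rfl⟩)
  have hμ : algebraicConnectivity G = s.get ⟨1, h1lt⟩ := by
    show s.getD 1 0 = _
    rw [List.getD_eq_getElem s 0 h1lt]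
    simp
  rcases Nat.eq_zero_or_pos j.val with hj0 | hjpos
  · exfalso
    apply hi
    rw [← hj]
    have hje : j = ⟨0, h0lt⟩ := Fin.ext hj0
    rw [hje, hhead]
  · rw [hμ, ← hj]
    exact hsorted.rel_get_of_le (by simp [Fin.le_def]; omega)

lemma aux_fiedler_rayleigh (hconn : G.Connected) (hcard : 2 ≤ Fintype.card V)
    (x : V → ℝ) (hsum : ∑ i, x i = 0) :
    algebraicConnectivity G * (∑ i, x i * x i) ≤
      Matrix.toLinearMap₂' ℝ (G.lapMatrix ℝ) x x := by
  have hne : Nonempty V := hconn.nonempty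
  set hA := (G.posSemidef_lapMatrix ℝ).isHermitian with hhA
  set lam := hA.eigenvalues with hlam
  set b := hA.eigenvectorBasis with hb
  set y : EuclideanSpace ℝ V := WithLp.toLp 2 x with hy
  have hip : ∀ u v : EuclideanSpace ℝ V, (inner ℝ u v : ℝ) = ∑ k, u k * v k := by
    intro u v
    simp [PiLp.inner_apply, RCLike.inner_apply, mul_comm]
  set c : V → ℝ := fun i => (inner ℝ (b i) y : ℝ) with hc
  have hcsum : ∀ i, c i = ∑ k, (b i) k * x k := fun i => hip (b i) y
  -- Parseval for the norm
  have h1 : ∑ i, x i * x i = ∑ i, c i * c i := by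
    have hpar := b.sum_inner_mul_inner y y
    calc ∑ i, x i * x i = (inner ℝ y y : ℝ) := (hip y y).symm
    _ = ∑ i, (inner ℝ y (b i) : ℝ) * (inner ℝ (b i) y : ℝ) := hpar.symm
    _ = ∑ i, c i * c i := by
        refine Finset.sum_congr rfl fun i _ => ?_
        have h : (inner ℝ y (b i) : ℝ) = c i := real_inner_comm (b i) y
        rw [h]
  have hsymm : (G.lapMatrix ℝ)ᵀ = G.lapMatrix ℝ := by
    rw [← Matrix.conjTranspose_eq_transpose_of_trivial]
    exact hA
  have hLsym : ∀ k j, G.lapMatrix ℝ k j = G.lapMatrix ℝ j k := by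
    intro k j
    conv_lhs => rw [← hsymm]
    rw [Matrix.transpose_apply]
  have hev : ∀ i k, ∑ j, G.lapMatrix ℝ k j * (b i) j = lam i * (b i) k := by
    intro i k
    have h := congrFun (hA.mulVec_eigenvectorBasis i) k
    simpa [Matrix.mulVec, dotProduct] using h
  set Ly : EuclideanSpace ℝ V := WithLp.toLp 2 ((G.lapMatrix ℝ) *ᵥ x) with hLy
  have hLyk : ∀ k, Ly k = ∑ j, G.lapMatrix ℝ k j * x j := by
    intro k
    simp [hLy, Matrix.mulVec, dotProduct]
  have hLyb : ∀ i, (inner ℝ (b i) Ly : ℝ) = lam i * c i := by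
    intro i
    rw [hip (b i) Ly]
    calc ∑ k, (b i) k * Ly k = ∑ k, ∑ j, (b i) k * (G.lapMatrix ℝ k j * x j) := by
          refine Finset.sum_congr rfl fun k _ => ?_
          rw [hLyk k, Finset.mul_sum]
    _ = ∑ j, ∑ k, (b i) k * (G.lapMatrix ℝ k j * x j) := Finset.sum_comm
    _ = ∑ j, x j * ∑ k, G.lapMatrix ℝ j k * (b i) k := by
          refine Finset.sum_congr rfl fun j _ => ?_
          rw [Finset.mul_sum]
          refine Finset.sum_congr rfl fun k _ => ?_
          rw [hLsym j k]
          ring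
    _ = ∑ j, x j * (lam i * (b i) j) := by
          refine Finset.sum_congr rfl fun j _ => ?_
          rw [hev i j]
    _ = lam i * c i := by
          rw [hcsum i, Finset.mul_sum]
          refine Finset.sum_congr rfl fun j _ => ?_
          ring
  have h2 : Matrix.toLinearMap₂' ℝ (G.lapMatrix ℝ) x x = ∑ i, lam i * (c i * c i) := by
    rw [Matrix.toLinearMap₂'_apply']
    have e1 : dotProduct x ((G.lapMatrix ℝ) *ᵥ x) = (inner ℝ y Ly : ℝ) := by
      rw [hip y Ly]
      rfl
    rw [e1, ← b.sum_inner_mul_inner y Ly]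
    refine Finset.sum_congr rfl fun i _ => ?_
    have h : (inner ℝ y (b i) : ℝ) = c i := real_inner_comm (b i) y
    rw [hLyb i, h]
    ring
  have h3 : ∀ i, lam i = 0 → c i = 0 := by
    intro i h0
    have hmv : (G.lapMatrix ℝ) *ᵥ (fun k => (b i) k) = 0 := by
      funext k
      have h := congrFun (hA.mulVec_eigenvectorBasis i) k
      have h' : ((G.lapMatrix ℝ) *ᵥ fun k => (b i) k) k = lam i * (b i) k := h
      rw [h', h0, zero_mul]
      rfl
    have hker : Matrix.toLin' (G.lapMatrix ℝ) (fun k => (b i) k) = 0 := by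
      rw [Matrix.toLin'_apply, hmv]
    have hconst := (G.lapMatrix_mulVec_eq_zero_iff_forall_reachable).1 hmv
    have v0 : V := Classical.arbitrary V
    have hbc : ∀ k, (b i) k = (b i) v0 := fun k => hconst k v0 (hconn.preconnected k v0)
    calc c i = ∑ k, (b i) k * x k := hcsum i
    _ = ∑ k, (b i) v0 * x k := Finset.sum_congr rfl fun k _ => by rw [hbc k]
    _ = (b i) v0 * ∑ k, x k := (Finset.mul_sum _ _ _).symm
    _ = 0 := by rw [hsum, mul_zero]
  rw [h1, h2, Finset.mul_sum]
  refine Finset.sum_le_sum fun i _ => ?_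
  by_cases h0 : lam i = 0
  · rw [h0, h3 i h0]
    simp
  · exact mul_le_mul_of_nonneg_right (aux_algCon_le_eigenvalue G hcard i h0)
      (mul_self_nonneg _)

end AuxSpectral

set_option maxHeartbeats 1600000 in
open Matrix in
/-- Let `G` be a connected non-complete graph of order `n`, maximum degree
`Δ` and algebraic connectivity `μ`. Then `ω(G) ≤ n(Δ − μ + 1)/(n − μ)`. -/
theorem cliqueNum_le_of_algebraicConnectivity {V : Type*} [Fintype V] [DecidableEq V]
    (G : SimpleGraph V) [DecidableRel G.Adj] (hconn : G.Connected) (hnc : G ≠ ⊤) :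
    (G.cliqueNum : ℝ) ≤
      (Fintype.card V : ℝ) * ((G.maxDegree : ℝ) - algebraicConnectivity G + 1) /
        ((Fintype.card V : ℝ) - algebraicConnectivity G) := by
  classical
  obtain ⟨u, v, huv, hnadj⟩ : ∃ u v : V, u ≠ v ∧ ¬ G.Adj u v := by
    by_contra h
    push_neg at h
    apply hnc
    ext a b
    simp only [SimpleGraph.top_adj]
    exact ⟨fun h' => h'.ne, fun hab => h a b hab⟩
  have hnt : Nontrivial V := ⟨⟨u, v, huv⟩⟩
  have hcard : 2 ≤ Fintype.card V := Fintype.one_lt_card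
  set μ := algebraicConnectivity G with hmu
  set n : ℝ := (Fintype.card V : ℝ) with hn
  have hn2 : (2 : ℝ) ≤ n := by rw [hn]; exact_mod_cast hcard
  -- Step 1 : μ ≤ n - 2 via the test vector e_u - e_v
  set z : V → ℝ := fun k => (if k = u then 1 else 0) - (if k = v then 1 else 0) with hz
  have hzsum : ∑ k, z k = 0 := by
    simp [hz, Finset.sum_sub_distrib]
  have hzsq : ∑ k, z k * z k = 2 := by
    have hpt : ∀ k, z k * z k = (if k = u then 1 else 0) + (if k = v then 1 else 0) := by
      intro k
      rcases eq_or_ne k u with rfl | h1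
      · simp [hz, huv]
      · rcases eq_or_ne k v with rfl | h2
        · simp [hz, h1]
        · simp [hz, h1, h2]
    rw [Finset.sum_congr rfl fun k _ => hpt k]
    rw [Finset.sum_add_distrib]
    simp only [Finset.sum_ite_eq', Finset.mem_univ, if_pos]
    norm_num
  have hQz : Matrix.toLinearMap₂' ℝ (G.lapMatrix ℝ) z z =
      (G.degree u : ℝ) + (G.degree v : ℝ) := by
    rw [Matrix.toLinearMap₂'_apply']
    have hw : ∀ k, ((G.lapMatrix ℝ) *ᵥ z) k =
        (G.degree k : ℝ) * z k - ∑ w ∈ G.neighborFinset k, z w := fun k =>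
      G.lapMatrix_mulVec_apply k z
    have hdot : dotProduct z ((G.lapMatrix ℝ) *ᵥ z) =
        ((G.lapMatrix ℝ) *ᵥ z) u - ((G.lapMatrix ℝ) *ᵥ z) v := by
      rw [dotProduct]
      simp [hz, sub_mul, Finset.sum_sub_distrib]
    rw [hdot, hw u, hw v]
    have hu1 : z u = 1 := by simp [hz, huv]
    have hv1 : z v = -1 := by simp [hz, huv.symm]
    have hnu : ∑ w ∈ G.neighborFinset u, z w = 0 := by
      have h1 : u ∉ G.neighborFinset u := by simp
      have h2 : v ∉ G.neighborFinset u := by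
        simp only [SimpleGraph.mem_neighborFinset]
        exact hnadj
      rw [hz]
      simp [Finset.sum_sub_distrib, Finset.sum_ite_eq', h1, h2]
    have hnv : ∑ w ∈ G.neighborFinset v, z w = 0 := by
      have h1 : v ∉ G.neighborFinset v := by simp
      have h2 : u ∉ G.neighborFinset v := by
        simp only [SimpleGraph.mem_neighborFinset]
        exact fun h => hnadj h.symm
      rw [hz]
      simp [Finset.sum_sub_distrib, Finset.sum_ite_eq', h1, h2]
    rw [hu1, hv1, hnu, hnv]
    ring
  have hray1 := aux_fiedler_rayleigh G hconn hcard z hzsum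
  rw [hzsq, hQz] at hray1
  have hdegu : (G.degree u : ℝ) ≤ n - 2 := by
    have hsub : G.neighborFinset u ⊆ (Finset.univ.erase v).erase u := by
      intro w hw
      rw [SimpleGraph.mem_neighborFinset] at hw
      refine Finset.mem_erase.mpr ⟨fun h => ?_, Finset.mem_erase.mpr ⟨fun h => ?_, Finset.mem_univ w⟩⟩
      · rw [h] at hw; exact G.loopless.irrefl u hw
      · rw [h] at hw; exact hnadj hw
    have h1 : G.degree u ≤ Fintype.card V - 2 := by
      have := Finset.card_le_card hsub
      rw [SimpleGraph.card_neighborFinset_eq_degree] at this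
      have h2 : ((Finset.univ.erase v).erase u).card = Fintype.card V - 2 := by
        rw [Finset.card_erase_of_mem (Finset.mem_erase.mpr ⟨huv, Finset.mem_univ u⟩),
          Finset.card_erase_of_mem (Finset.mem_univ v), Finset.card_univ]
        omega
      omega
    calc (G.degree u : ℝ) ≤ ((Fintype.card V - 2 : ℕ) : ℝ) := by exact_mod_cast h1
    _ = n - 2 := by rw [hn, Nat.cast_sub hcard]; norm_num
  have hdegv : (G.degree v : ℝ) ≤ n - 2 := by
    have hsub : G.neighborFinset v ⊆ (Finset.univ.erase u).erase v := by
      intro w hw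
      rw [SimpleGraph.mem_neighborFinset] at hw
      refine Finset.mem_erase.mpr ⟨fun h => ?_, Finset.mem_erase.mpr ⟨fun h => ?_, Finset.mem_univ w⟩⟩
      · rw [h] at hw; exact G.loopless.irrefl v hw
      · rw [h] at hw; exact hnadj hw.symm
    have h1 : G.degree v ≤ Fintype.card V - 2 := by
      have := Finset.card_le_card hsub
      rw [SimpleGraph.card_neighborFinset_eq_degree] at this
      have h2 : ((Finset.univ.erase u).erase v).card = Fintype.card V - 2 := by
        rw [Finset.card_erase_of_mem (Finset.mem_erase.mpr ⟨huv.symm, Finset.mem_univ v⟩),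
          Finset.card_erase_of_mem (Finset.mem_univ u), Finset.card_univ]
        omega
      omega
    calc (G.degree v : ℝ) ≤ ((Fintype.card V - 2 : ℕ) : ℝ) := by exact_mod_cast h1
    _ = n - 2 := by rw [hn, Nat.cast_sub hcard]; norm_num
  have hμn : μ ≤ n - 2 := by linarith
  have hnμ : 0 < n - μ := by linarith
  -- Step 2 : the clique
  obtain ⟨X, hX⟩ := G.exists_isNClique_cliqueNum
  have hXcl : G.IsClique (X : Set V) := hX.1
  have hXcard : X.card = G.cliqueNum := hX.2
  set ω : ℕ := G.cliqueNum with homega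
  set ωr : ℝ := (ω : ℝ) with homegar
  set Δr : ℝ := (G.maxDegree : ℝ) with hDr
  have hω1 : 1 ≤ ω := by
    have hcl : G.IsClique ({u} : Finset V) := by
      simp [SimpleGraph.isClique_iff, Set.pairwise_singleton]
    have := SimpleGraph.IsClique.card_le_cliqueNum (G := G) (t := {u}) (tc := hcl)
    simpa using this
  have hωr1 : (1 : ℝ) ≤ ωr := by rw [homegar]; exact_mod_cast hω1
  have hωn : ω < Fintype.card V := by
    rcases lt_or_ge ω (Fintype.card V) with h | h
    · exact h
    · exfalso
      have hXuniv : X = Finset.univ :=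
        Finset.eq_univ_of_card X (le_antisymm (Finset.card_le_univ X) (hXcard ▸ h))
      exact hnadj (hXcl (by simp [hXuniv]) (by simp [hXuniv]) huv)
  have hωrn : ωr ≤ n - 1 := by
    rw [homegar, hn]
    have : (ω : ℝ) ≤ ((Fintype.card V - 1 : ℕ) : ℝ) := by exact_mod_cast Nat.le_sub_one_of_lt hωn
    rw [Nat.cast_sub (by omega)] at this
    simpa using this
  -- the clique test vector
  set xx : V → ℝ := fun i => if i ∈ X then n - ωr else -ωr with hxx
  have hXcardr : (X.card : ℝ) = ωr := by rw [hXcard]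
  have hxpt : ∀ i, xx i = (if i ∈ X then n else 0) - ωr := by
    intro i
    by_cases h : i ∈ X <;> simp [hxx, h]
  have hxsum : ∑ i, xx i = 0 := by
    rw [Finset.sum_congr rfl fun i _ => hxpt i, Finset.sum_sub_distrib,
      Finset.sum_ite_mem, Finset.univ_inter, Finset.sum_const, Finset.sum_const,
      Finset.card_univ]
    rw [nsmul_eq_mul, nsmul_eq_mul, hXcardr]
    rw [← hn]
    ring
  have hxsqpt : ∀ i, xx i * xx i = (if i ∈ X then (n - ωr)^2 - ωr^2 else 0) + ωr^2 := by
    intro i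
    by_cases h : i ∈ X <;> simp [hxx, h] <;> ring
  have hxsq : ∑ i, xx i * xx i = ωr * n * (n - ωr) := by
    rw [Finset.sum_congr rfl fun i _ => hxsqpt i, Finset.sum_add_distrib,
      Finset.sum_ite_mem, Finset.univ_inter, Finset.sum_const, Finset.sum_const,
      Finset.card_univ]
    rw [nsmul_eq_mul, nsmul_eq_mul, hXcardr, ← hn]
    ring
  -- bounding the quadratic form on xx
  set T : V → V → ℝ := fun i j => if G.Adj i j then (xx i - xx j)^2 else 0 with hT
  have hTnonneg : ∀ i j, 0 ≤ T i j := by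
    intro i j
    rw [hT]
    by_cases h : G.Adj i j <;> simp [h] <;> positivity
  have hTswap : ∀ i j, T i j = T j i := by
    intro i j
    by_cases h : G.Adj i j
    · have h' : G.Adj j i := h.symm
      simp only [hT, if_pos h, if_pos h']
      ring
    · have h' : ¬ G.Adj j i := fun hh => h hh.symm
      simp only [hT, if_neg h, if_neg h']
  have hTzero : ∀ i j, (i ∈ X ↔ j ∈ X) → T i j = 0 := by
    intro i j hij
    have hxeq : xx i = xx j := by
      by_cases h : i ∈ X
      · simp [hxx, h, hij.mp h]
      · have hj : j ∉ X := fun hj => h (hij.mpr hj)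
        simp [hxx, h, hj]
    rw [hT]
    by_cases h : G.Adj i j <;> simp [h, hxeq]
  have hdecomp : ∀ i j, T i j =
      (if i ∈ X ∧ j ∉ X then T i j else 0) + (if j ∈ X ∧ i ∉ X then T i j else 0) := by
    intro i j
    by_cases h1 : i ∈ X <;> by_cases h2 : j ∈ X
    · rw [hTzero i j (by simp [h1, h2])]; simp [h1, h2]
    · simp [h1, h2]
    · simp [h1, h2]
    · rw [hTzero i j (by simp [h1, h2])]; simp [h1, h2]
  set S : ℝ := ∑ i, ∑ j, (if i ∈ X ∧ j ∉ X then T i j else 0) with hS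
  have hsum2 : ∑ i, ∑ j, T i j = 2 * S := by
    calc ∑ i, ∑ j, T i j
        = ∑ i, ∑ j, ((if i ∈ X ∧ j ∉ X then T i j else 0) +
            (if j ∈ X ∧ i ∉ X then T i j else 0)) := by
          refine Finset.sum_congr rfl fun i _ => Finset.sum_congr rfl fun j _ => hdecomp i j
    _ = S + ∑ i, ∑ j, (if j ∈ X ∧ i ∉ X then T i j else 0) := by
          rw [hS]
          simp [Finset.sum_add_distrib]
    _ = S + ∑ j, ∑ i, (if j ∈ X ∧ i ∉ X then T i j else 0) := by rw [Finset.sum_comm]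
    _ = S + S := by
          rw [hS]
          congr 1
          refine Finset.sum_congr rfl fun j _ => Finset.sum_congr rfl fun i _ => ?_
          rw [hTswap j i]
    _ = 2 * S := by ring
  have hinner : ∀ i ∈ X, ∑ j, (if i ∈ X ∧ j ∉ X then T i j else 0) ≤ (Δr - ωr + 1) * n^2 := by
    intro i hi
    have hstep : ∀ j, (if i ∈ X ∧ j ∉ X then T i j else 0) ≤
        (if j ∈ G.neighborFinset i \ X then n^2 else 0) := by
      intro j
      by_cases hj : j ∈ X
      · simp only [hj, and_false, if_neg (by simp [hj] : ¬(i ∈ X ∧ j ∉ X))]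
        by_cases hjm : j ∈ G.neighborFinset i \ X <;> simp [hjm] <;> positivity
      · simp only [hi, hj, and_true, not_false_iff, if_pos (⟨hi, hj⟩ : i ∈ X ∧ ¬j ∈ X)]
        by_cases hadj : G.Adj i j
        · have hjm : j ∈ G.neighborFinset i \ X := by
            rw [Finset.mem_sdiff, SimpleGraph.mem_neighborFinset]
            exact ⟨hadj, hj⟩
          rw [if_pos hjm, hT]
          simp only [if_pos hadj]
          have hval : xx i - xx j = n := by
            simp only [hxx, if_pos hi, if_neg hj]
            ring
          rw [hval]
          simp
        · rw [hT]
          simp only [if_neg hadj]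
          by_cases hjm : j ∈ G.neighborFinset i \ X <;> simp [hjm] <;> positivity
    calc ∑ j, (if i ∈ X ∧ j ∉ X then T i j else 0)
        ≤ ∑ j, (if j ∈ G.neighborFinset i \ X then n^2 else 0) :=
          Finset.sum_le_sum fun j _ => hstep j
    _ = ((G.neighborFinset i \ X).card : ℝ) * n^2 := by
          rw [Finset.sum_ite_mem, Finset.univ_inter, Finset.sum_const, nsmul_eq_mul]
    _ ≤ (Δr - ωr + 1) * n^2 := by
          have hcap : G.neighborFinset i ∩ X = X.erase i := by
            ext w
            simp only [Finset.mem_inter, SimpleGraph.mem_neighborFinset, Finset.mem_erase]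
            constructor
            · rintro ⟨hadj, hwX⟩
              exact ⟨fun h => G.loopless.irrefl i (h ▸ hadj), hwX⟩
            · rintro ⟨hne, hwX⟩
              exact ⟨hXcl hi hwX (fun h => hne (h.symm)), hwX⟩
          have hcardeq : (G.neighborFinset i \ X).card + (ω - 1) = G.degree i := by
            have h1 := Finset.card_sdiff_add_card_inter (G.neighborFinset i) X
            rw [hcap, Finset.card_erase_of_mem hi, hXcard,
              SimpleGraph.card_neighborFinset_eq_degree] at h1
            exact h1
          have hdegle : G.degree i ≤ G.maxDegree := G.degree_le_maxDegree i
          have hcastr : ((G.neighborFinset i \ X).card : ℝ) = (G.degree i : ℝ) - (ωr - 1) := by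
            have := congrArg (fun m : ℕ => (m : ℝ)) hcardeq
            push_cast [Nat.cast_sub hω1] at this
            rw [homegar]
            linarith
          have : ((G.neighborFinset i \ X).card : ℝ) ≤ Δr - ωr + 1 := by
            rw [hcastr, hDr]
            have : (G.degree i : ℝ) ≤ (G.maxDegree : ℝ) := by exact_mod_cast hdegle
            linarith
          have hn2' : (0:ℝ) ≤ n^2 := by positivity
          exact mul_le_mul_of_nonneg_right this hn2'
  have hSbound : S ≤ ωr * ((Δr - ωr + 1) * n^2) := by
    calc S ≤ ∑ i, (if i ∈ X then (Δr - ωr + 1) * n^2 else 0) := by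
          rw [hS]
          refine Finset.sum_le_sum fun i _ => ?_
          by_cases hi : i ∈ X
          · rw [if_pos hi]
            exact hinner i hi
          · rw [if_neg hi]
            refine le_of_eq (Finset.sum_eq_zero fun j _ => ?_)
            simp [hi]
    _ = ωr * ((Δr - ωr + 1) * n^2) := by
          rw [Finset.sum_ite_mem, Finset.univ_inter, Finset.sum_const, nsmul_eq_mul, hXcardr]
  have hQxx : Matrix.toLinearMap₂' ℝ (G.lapMatrix ℝ) xx xx ≤ ωr * ((Δr - ωr + 1) * n^2) := by
    rw [G.lapMatrix_toLinearMap₂' ℝ xx]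
    have : (∑ i, ∑ j, if G.Adj i j then (xx i - xx j)^2 else 0) = 2 * S := hsum2
    rw [this]
    linarith
  have hray2 := aux_fiedler_rayleigh G hconn hcard xx hxsum
  rw [hxsq] at hray2
  have hkey : μ * (n - ωr) ≤ (Δr - ωr + 1) * n := by
    have hpos : (0:ℝ) < ωr * n := by nlinarith
    refine le_of_mul_le_mul_right ?_ hpos
    have h := le_trans hray2 hQxx
    have e1 : μ * (n - ωr) * (ωr * n) = μ * (ωr * n * (n - ωr)) := by ring
    have e2 : (Δr - ωr + 1) * n * (ωr * n) = ωr * ((Δr - ωr + 1) * n ^ 2) := by ring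
    rw [e1, e2]
    exact h
  rw [le_div_iff₀ hnμ]
  nlinarith [hkey]
end
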